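/- Suppose additionally y ∈ A and λ ∈ F satisfy hy − yh = λy. Then in A[[t]]: v · y · u = (1−et)^{−λ} · Σ_{ℓ≥0} d^{(ℓ)}(y) · h_{1}^{⟨ℓ⟩} · t^ℓ, where u := u_0 and v := v_0 (so that v = u⁻¹). Equivalently, the twisted antipode satisfies S(y) = u⁻¹·(−y)·u = −(1−et)^{−λ} Σ_{ℓ≥0} d^{(ℓ)}(y) h_1^{⟨ℓ⟩} t^ℓ. (This is the deformed antipode formula of the paper's Theorem 3.5, proved in U(𝐊)[[t]] with h = D_K(x^{ε_k+ε_{−k}}), e = D_K(x^{2ε_k+ε_{−k}}), y = D_K(x^α), λ = α_k − α_{−k}; only the stated commutation relations are used.) -/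

import Mathlib

/-- Falling factorial `x_a^{[m]} := (x+a)(x+a-1)⋯(x+a-m+1)` in an `F`-algebra `A`. -/
def fallPow {F A : Type*} [Field F] [Ring A] [Algebra F A] (x : A) (a : F) : ℕ → A
  | 0 => 1
  | m + 1 => fallPow x a m * (x + algebraMap F A (a - (m : F)))

/-- Rising factorial `x_a^{⟨m⟩} := (x+a)(x+a+1)⋯(x+a+m-1)` in an `F`-algebra `A`. -/
def risePow {F A : Type*} [Field F] [Ring A] [Algebra F A] (x : A) (a : F) : ℕ → A
  | 0 => 1
  | m + 1 => risePow x a m * (x + algebraMap F A (a + (m : F)))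

/-- Scalar rising factorial `c^{⟨m⟩} = c(c+1)⋯(c+m-1)` in `F`. -/
def riseC {F : Type*} [Field F] (c : F) (m : ℕ) : F :=
  ∏ i ∈ Finset.range m, (c + (i : F))

/-- `(1−et)^{−c} = Σ_{r≥0} (1/r!) c^{⟨r⟩} e^r t^r ∈ A[[t]]`. -/
noncomputable def oneSubEtNegPow {F A : Type*} [Field F] [Ring A] [Algebra F A]
    (e : A) (c : F) : PowerSeries A :=
  PowerSeries.mk fun r => (((r.factorial : F))⁻¹ * riseC c r) • e ^ r

/-- `u_a = Σ_{r≥0} ((−1)^r/r!) h_{−a}^{[r]} e^r t^r ∈ A[[t]]`. -/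
noncomputable def uSer {F A : Type*} [Field F] [Ring A] [Algebra F A] (h e : A) (a : F) :
    PowerSeries A :=
  PowerSeries.mk fun r => ((-1 : F) ^ r / (r.factorial : F)) • (fallPow h (-a) r * e ^ r)

/-- `v_a = Σ_{r≥0} (1/r!) h_a^{[r]} e^r t^r ∈ A[[t]]`. -/
noncomputable def vSer {F A : Type*} [Field F] [Ring A] [Algebra F A] (h e : A) (a : F) :
    PowerSeries A :=
  PowerSeries.mk fun r => ((r.factorial : F))⁻¹ • (fallPow h a r * e ^ r)

/-- The divided power `d^{(ℓ)} = (1/ℓ!)(ad e)^ℓ` of the inner derivation `ad e`. -/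
def dPow (F : Type*) {A : Type*} [Field F] [Ring A] [Algebra F A]
    (e : A) (ℓ : ℕ) (x : A) : A :=
  ((ℓ.factorial : F))⁻¹ • ((fun z => e * z - z * e)^[ℓ] x)

set_option linter.unusedSectionVars false

section helpers
variable {F A : Type*} [Field F] [Ring A] [Algebra F A]

local notation "Cc" => algebraMap F A

lemma fall_succ' (x : A) (a : F) (m : ℕ) :
    fallPow x a (m+1) = (x + Cc a) * fallPow x (a-1) m := by
  induction m with
  | zero => simp [fallPow]
  | succ m ih =>
      have hsc : a - ((m+1 : ℕ) : F) = a - 1 - (m : F) := by push_cast; ring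
      show fallPow x a (m+1) * (x + Cc (a - ((m+1:ℕ) : F))) = _
      rw [ih, hsc]
      show _ = (x + Cc a) * (fallPow x (a-1) m * (x + Cc (a - 1 - (m : F))))
      rw [mul_assoc]

lemma rise_succ' (x : A) (a : F) (m : ℕ) :
    risePow x a (m+1) = (x + Cc a) * risePow x (a+1) m := by
  induction m with
  | zero => simp [risePow]
  | succ m ih =>
      have hsc : a + ((m+1 : ℕ) : F) = a + 1 + (m : F) := by push_cast; ring
      show risePow x a (m+1) * (x + Cc (a + ((m+1:ℕ) : F))) = _
      rw [ih, hsc]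
      show _ = (x + Cc a) * (risePow x (a+1) m * (x + Cc (a + 1 + (m : F))))
      rw [mul_assoc]

variable (h e : A) (he : h * e - e * h = e)
include he

lemma h_mul_pow (k : ℕ) : h * e ^ k = e ^ k * (h + Cc (k : F)) := by
  have hcomm : h * e = e * h + e := sub_eq_iff_eq_add'.mp he
  induction k with
  | zero => simp
  | succ k ih =>
      have hsc : Cc ((k+1 : ℕ) : F) = Cc (k : F) + 1 := by rw [Nat.cast_add, Nat.cast_one, map_add, map_one]
      calc h * e ^ (k+1) = (h * e) * e ^ k := by rw [pow_succ']; noncomm_ring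
        _ = e * (h * e ^ k) + e * e ^ k := by rw [hcomm]; noncomm_ring
        _ = e * (e ^ k * (h + Cc (k : F))) + e * e ^ k := by rw [ih]
        _ = e ^ (k+1) * (h + Cc ((k+1 : ℕ) : F)) := by
            rw [hsc, pow_succ']; noncomm_ring

lemma pow_mul_h (k : ℕ) : e ^ k * h = (h - Cc (k : F)) * e ^ k := by
  have h1 := h_mul_pow (F := F) h e he k
  have hc : Cc (k : F) * e ^ k = e ^ k * Cc (k : F) := Algebra.commutes _ _
  rw [mul_add] at h1
  rw [sub_mul, hc, h1]
  abel

lemma e_mul_fall (a : F) (m : ℕ) :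
    e * fallPow h a m = fallPow h (a-1) m * e := by
  induction m with
  | zero => simp [fallPow]
  | succ m ih =>
      show e * (fallPow h a m * (h + Cc (a - (m : F)))) = fallPow h (a-1) m * (h + Cc (a - 1 - (m : F))) * e
      have step : e * (h + Cc (a - (m : F))) = (h + Cc (a - 1 - (m : F))) * e := by
        have hcomm : e * h = h * e - e := eq_sub_iff_add_eq.mpr (sub_eq_iff_eq_add'.mp he).symm
        have hc : e * Cc (a - (m:F)) = Cc (a - (m:F)) * e := (Algebra.commutes _ _).symm
        have hsc : Cc (a - 1 - (m : F)) = Cc (a - (m:F)) - 1 := by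
          rw [← map_one (algebraMap F A), ← map_sub]; congr 1; ring
        rw [mul_add, hcomm, hc, hsc]
        noncomm_ring
      calc e * (fallPow h a m * (h + Cc (a - (m : F))))
          = (e * fallPow h a m) * (h + Cc (a - (m : F))) := by noncomm_ring
        _ = fallPow h (a-1) m * (e * (h + Cc (a - (m : F)))) := by rw [ih]; noncomm_ring
        _ = _ := by rw [step]; noncomm_ring

lemma rise_mul_e (a : F) (m : ℕ) :
    risePow h a m * e = e * risePow h (a+1) m := by
  induction m with
  | zero => simp [risePow]
  | succ m ih =>
      show risePow h a m * (h + Cc (a + (m : F))) * e = e * (risePow h (a+1) m * (h + Cc (a + 1 + (m : F))))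
      have step : (h + Cc (a + (m : F))) * e = e * (h + Cc (a + 1 + (m : F))) := by
        have hcomm : h * e = e * h + e := sub_eq_iff_eq_add'.mp he
        have hc : Cc (a + (m:F)) * e = e * Cc (a + (m:F)) := Algebra.commutes _ _
        have hsc : Cc (a + 1 + (m : F)) = Cc (a + (m:F)) + 1 := by
          rw [← map_one (algebraMap F A), ← map_add]; congr 1; ring
        rw [add_mul, hcomm, hc, hsc]
        noncomm_ring
      calc risePow h a m * (h + Cc (a + (m : F))) * e
          = risePow h a m * ((h + Cc (a + (m : F))) * e) := by noncomm_ring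
        _ = (risePow h a m * e) * (h + Cc (a + 1 + (m : F))) := by rw [step]; noncomm_ring
        _ = _ := by rw [ih]; noncomm_ring

omit he

lemma h_mul_rise (a : F) (m : ℕ) :
    h * risePow h a m = risePow h a m * h := by
  induction m with
  | zero => simp [risePow]
  | succ m ih =>
      show h * (risePow h a m * (h + Cc (a + (m : F)))) = risePow h a m * (h + Cc (a + (m : F))) * h
      have hstep : h * (h + Cc (a + (m : F))) = (h + Cc (a + (m : F))) * h := by
        rw [mul_add, add_mul, Algebra.commutes]
      calc h * (risePow h a m * (h + Cc (a + (m : F))))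
          = (h * risePow h a m) * (h + Cc (a + (m:F))) := by noncomm_ring
        _ = risePow h a m * (h * (h + Cc (a + (m:F)))) := by rw [ih]; noncomm_ring
        _ = _ := by rw [hstep]; noncomm_ring

end helpers

section part2
variable {F A : Type*} [Field F] [Ring A] [Algebra F A]

local notation "Cc" => algebraMap F A

/-- iterate of `ad e` -/
def zIt (e y : A) (ℓ : ℕ) : A := (fun w => e * w - w * e)^[ℓ] y

lemma zIt_succ (e y : A) (ℓ : ℕ) :
    zIt e y (ℓ+1) = e * zIt e y ℓ - zIt e y ℓ * e :=
  Function.iterate_succ_apply' _ _ _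

lemma z_weight (h e y : A) (he : h * e - e * h = e) (lam : F)
    (hy : h * y - y * h = lam • y) :
    ∀ ℓ : ℕ, h * zIt e y ℓ - zIt e y ℓ * h = (lam + (ℓ : F)) • zIt e y ℓ := by
  intro ℓ
  induction ℓ with
  | zero =>
      show h * y - y * h = (lam + ((0:ℕ) : F)) • y
      rw [Nat.cast_zero, add_zero]; exact hy
  | succ ℓ ih =>
      have hcomm : h * e = e * h + e := sub_eq_iff_eq_add'.mp he
      have hZ : h * zIt e y ℓ = zIt e y ℓ * h + (lam + (ℓ:F)) • zIt e y ℓ := by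
        rw [← ih]; abel
      rw [zIt_succ]
      have h1 : h * (e * zIt e y ℓ)
          = e * zIt e y ℓ * h + (lam + (ℓ:F)) • (e * zIt e y ℓ) + e * zIt e y ℓ := by
        rw [← mul_assoc, hcomm, add_mul, mul_assoc, hZ, mul_add, mul_smul_comm]
        noncomm_ring
      have h2 : h * (zIt e y ℓ * e)
          = zIt e y ℓ * e * h + (lam + (ℓ:F)) • (zIt e y ℓ * e) + zIt e y ℓ * e := by
        rw [← mul_assoc, hZ, add_mul, smul_mul_assoc, mul_assoc, hcomm, mul_add]
        noncomm_ring
      have hc : (lam + ((ℓ+1 : ℕ) : F)) = (lam + (ℓ:F)) + 1 := by push_cast; ring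
      rw [mul_sub, sub_mul, h1, h2, hc]
      module

variable (h e : A) (he : h * e - e * h = e)
include he

lemma rise_h_e (ℓ : ℕ) :
    risePow h (1:F) ℓ * (h * e) = e * risePow h (1:F) (ℓ+1) := by
  have h1 : h * e = e * (h + Cc (1:F)) := by
    have := h_mul_pow (F := F) h e he 1
    simpa using this
  have hcm : (h + Cc (1:F)) * risePow h ((1:F)+1) ℓ = risePow h ((1:F)+1) ℓ * (h + Cc (1:F)) := by
    rw [add_mul, mul_add, h_mul_rise (F:=F), Algebra.commutes]
  calc risePow h (1:F) ℓ * (h * e)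
      = (risePow h (1:F) ℓ * e) * (h + Cc (1:F)) := by rw [h1]; noncomm_ring
    _ = e * (risePow h ((1:F)+1) ℓ * (h + Cc (1:F))) := by
        rw [rise_mul_e (F:=F) h e he 1 ℓ]; noncomm_ring
    _ = e * ((h + Cc (1:F)) * risePow h ((1:F)+1) ℓ) := by rw [hcm]
    _ = e * risePow h (1:F) (ℓ+1) := by rw [← rise_succ']

lemma core (y : A) (lam : F) (hy : h * y - y * h = lam • y) (r ℓ : ℕ) :
    (h*e) * (e^r * (zIt e y ℓ * risePow h (1:F) ℓ))
      - (e^r * (zIt e y ℓ * risePow h (1:F) ℓ)) * (h*e)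
      = (lam + (r:F)) • (e^(r+1) * (zIt e y ℓ * risePow h (1:F) ℓ))
        + e^r * (zIt e y (ℓ+1) * risePow h (1:F) (ℓ+1)) := by
  have hR1 : risePow h (1:F) (ℓ+1) = risePow h (1:F) ℓ * (h + Cc (1 + (ℓ:F))) := rfl
  have hZ : h * zIt e y ℓ = zIt e y ℓ * h + Cc (lam + (ℓ:F)) * zIt e y ℓ := by
    have := z_weight h e y he lam hy ℓ
    rw [← Algebra.smul_def, ← this]; abel
  have hZc : (h + Cc (((r+1:ℕ):F))) * zIt e y ℓ
      = zIt e y ℓ * (h + Cc (((r+1:ℕ):F) + (lam + (ℓ:F)))) := by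
    have hmap : Cc (((r+1:ℕ):F) + (lam + (ℓ:F))) = Cc (((r+1:ℕ):F)) + Cc (lam + (ℓ:F)) :=
      map_add _ _ _
    rw [add_mul, hZ, hmap, mul_add, mul_add, Algebra.commutes, Algebra.commutes]
    abel
  have hcmR : ∀ c : F, (h + Cc c) * risePow h (1:F) ℓ = risePow h (1:F) ℓ * (h + Cc c) := by
    intro c; rw [add_mul, mul_add, h_mul_rise (F:=F), Algebra.commutes]
  have step1 : (h*e) * (e^r * (zIt e y ℓ * risePow h (1:F) ℓ))
      = (e^(r+1) * (zIt e y ℓ * risePow h (1:F) ℓ)) * (h + Cc (((r+1:ℕ):F) + (lam + (ℓ:F)))) := by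
    calc (h*e) * (e^r * (zIt e y ℓ * risePow h (1:F) ℓ))
        = (h * e^(r+1)) * (zIt e y ℓ * risePow h (1:F) ℓ) := by
          rw [pow_succ']; noncomm_ring
      _ = e^(r+1) * ((h + Cc (((r+1:ℕ):F))) * zIt e y ℓ * risePow h (1:F) ℓ) := by
          rw [h_mul_pow (F:=F) h e he (r+1)]; try noncomm_ring
      _ = e^(r+1) * (zIt e y ℓ * (h + Cc (((r+1:ℕ):F) + (lam + (ℓ:F)))) * risePow h (1:F) ℓ) := by
          rw [hZc]
      _ = e^(r+1) * (zIt e y ℓ * (risePow h (1:F) ℓ * (h + Cc (((r+1:ℕ):F) + (lam + (ℓ:F)))))) := by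
          rw [mul_assoc (zIt e y ℓ), hcmR]; try noncomm_ring
      _ = (e^(r+1) * (zIt e y ℓ * risePow h (1:F) ℓ)) * (h + Cc (((r+1:ℕ):F) + (lam + (ℓ:F)))) := by
          noncomm_ring
  have step2 : (e^r * (zIt e y ℓ * risePow h (1:F) ℓ)) * (h*e)
      = (e^(r+1) * (zIt e y ℓ * risePow h (1:F) ℓ)) * (h + Cc (1 + (ℓ:F)))
        - e^r * (zIt e y (ℓ+1) * risePow h (1:F) (ℓ+1)) := by
    have hz1 : zIt e y ℓ * e = e * zIt e y ℓ - zIt e y (ℓ+1) := by rw [zIt_succ]; abel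
    calc (e^r * (zIt e y ℓ * risePow h (1:F) ℓ)) * (h*e)
        = e^r * (zIt e y ℓ * (risePow h (1:F) ℓ * (h*e))) := by noncomm_ring
      _ = e^r * (zIt e y ℓ * (e * risePow h (1:F) (ℓ+1))) := by rw [rise_h_e (F:=F) h e he ℓ]
      _ = e^r * ((zIt e y ℓ * e) * risePow h (1:F) (ℓ+1)) := by noncomm_ring
      _ = e^r * ((e * zIt e y ℓ - zIt e y (ℓ+1)) * risePow h (1:F) (ℓ+1)) := by rw [hz1]
      _ = (e^r * e) * (zIt e y ℓ * risePow h (1:F) (ℓ+1))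
            - e^r * (zIt e y (ℓ+1) * risePow h (1:F) (ℓ+1)) := by noncomm_ring
      _ = (e^(r+1) * (zIt e y ℓ * risePow h (1:F) ℓ)) * (h + Cc (1 + (ℓ:F)))
            - e^r * (zIt e y (ℓ+1) * risePow h (1:F) (ℓ+1)) := by
          rw [← pow_succ, hR1]; noncomm_ring
  rw [step1, step2]
  have hsc : Cc (((r+1:ℕ):F) + (lam + (ℓ:F))) = Cc (1 + (ℓ:F)) + Cc (lam + (r:F)) := by
    rw [← map_add]; congr 1; push_cast; ring
  have hx : (e^(r+1) * (zIt e y ℓ * risePow h (1:F) ℓ)) * Cc (lam + (r:F))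
      = (lam + (r:F)) • (e^(r+1) * (zIt e y ℓ * risePow h (1:F) ℓ)) := by
    rw [← Algebra.commutes, ← Algebra.smul_def]
  rw [hsc, ← hx]
  noncomm_ring

end part2

section part3
variable {F A : Type*} [Field F] [CharZero F] [Ring A] [Algebra F A] [Module F A]

end part3

section part3b
variable {F A : Type*} [Field F] [CharZero F] [Ring A] [Algebra F A]

lemma ode_coeff {w : A} (f g : ℕ → A)
    (H : ∀ r ℓ : ℕ, w * (f r * g ℓ) - (f r * g ℓ) * w
        = ((r:F)+1) • (f (r+1) * g ℓ) + ((ℓ:F)+1) • (f r * g (ℓ+1))) (n : ℕ) :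
    ((n:F)+1) • (PowerSeries.coeff (n+1) (PowerSeries.mk f * PowerSeries.mk g))
      = w * PowerSeries.coeff n (PowerSeries.mk f * PowerSeries.mk g)
        - PowerSeries.coeff n (PowerSeries.mk f * PowerSeries.mk g) * w := by
  rw [PowerSeries.coeff_mul, PowerSeries.coeff_mul,
    Finset.Nat.sum_antidiagonal_eq_sum_range_succ_mk,
    Finset.Nat.sum_antidiagonal_eq_sum_range_succ_mk]
  simp only [PowerSeries.coeff_mk]
  rw [Finset.smul_sum, Finset.mul_sum, Finset.sum_mul, ← Finset.sum_sub_distrib]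
  have key : ∀ k ∈ Finset.range (n+1+1), ((n:F)+1) • (f k * g (n+1-k))
      = (k:F) • (f k * g (n+1-k)) + ((n+1-k : ℕ):F) • (f k * g (n+1-k)) := by
    intro k hk
    rw [← add_smul]
    congr 1
    have hk' : k ≤ n+1 := by
      have := Finset.mem_range.mp hk; omega
    rw [Nat.cast_sub hk']
    push_cast
    ring
  rw [Finset.sum_congr rfl key, Finset.sum_add_distrib]
  have s1 : ∑ k ∈ Finset.range (n+1+1), (k:F) • (f k * g (n+1-k))
      = ∑ k ∈ Finset.range (n+1), ((k:F)+1) • (f (k+1) * g (n-k)) := by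
    rw [Finset.sum_range_succ']
    simp only [Nat.cast_zero, zero_smul, add_zero]
    apply Finset.sum_congr rfl
    intro i _
    have h1 : n+1-(i+1) = n-i := by omega
    rw [h1]
    push_cast
    ring_nf
  have s2 : ∑ k ∈ Finset.range (n+1+1), ((n+1-k : ℕ):F) • (f k * g (n+1-k))
      = ∑ k ∈ Finset.range (n+1), (((n-k : ℕ):F)+1) • (f k * g ((n-k)+1)) := by
    rw [Finset.sum_range_succ]
    simp only [Nat.sub_self, Nat.cast_zero, zero_smul, add_zero]
    apply Finset.sum_congr rfl
    intro k hk
    have hk' : k ≤ n := by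
      have := Finset.mem_range.mp hk; omega
    have h1 : n+1-k = (n-k)+1 := by omega
    rw [h1]
    push_cast
    ring_nf
  rw [s1, s2, ← Finset.sum_add_distrib]
  apply Finset.sum_congr rfl
  intro k _
  exact (H k (n-k)).symm

lemma ode_unique {w : A} {f g : PowerSeries A}
    (h0 : PowerSeries.coeff 0 f = PowerSeries.coeff 0 g)
    (hf : ∀ n : ℕ, ((n:F)+1) • PowerSeries.coeff (n+1) f
        = w * PowerSeries.coeff n f - PowerSeries.coeff n f * w)
    (hg : ∀ n : ℕ, ((n:F)+1) • PowerSeries.coeff (n+1) g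
        = w * PowerSeries.coeff n g - PowerSeries.coeff n g * w) :
    f = g := by
  ext n
  induction n with
  | zero => exact h0
  | succ n ih =>
      have hne : ((n:F)+1) ≠ 0 := by
        have := Nat.cast_add_one_ne_zero (R := F) n
        push_cast at this ⊢
        exact this
      apply smul_right_injective A hne
      show ((n:F)+1) • PowerSeries.coeff (n+1) f = ((n:F)+1) • PowerSeries.coeff (n+1) g
      rw [hf n, hg n, ih]

lemma C_mul_mk (y : A) (f : ℕ → A) :
    PowerSeries.C y * PowerSeries.mk f = PowerSeries.mk (fun n => y * f n) := by
  ext n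
  simp [PowerSeries.coeff_C_mul]

end part3b

def vCo (F : Type*) {A : Type*} [Field F] [Ring A] [Algebra F A] (h e : A) (r : ℕ) : A :=
  ((r.factorial : F))⁻¹ • (fallPow h (0:F) r * e ^ r)

def uCo (F : Type*) {A : Type*} [Field F] [Ring A] [Algebra F A] (h e : A) (q : ℕ) : A :=
  ((-1:F) ^ q / (q.factorial : F)) • (fallPow h (0:F) q * e ^ q)

def pCo (F : Type*) {A : Type*} [Field F] [Ring A] [Algebra F A] (e : A) (lam : F) (r : ℕ) : A :=
  (((r.factorial : F))⁻¹ * riseC lam r) • e ^ r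

def qCo (F : Type*) {A : Type*} [Field F] [Ring A] [Algebra F A] (h e y : A) (ℓ : ℕ) : A :=
  dPow F e ℓ y * risePow h (1:F) ℓ

section part4
variable {F A : Type*} [Field F] [CharZero F] [Ring A] [Algebra F A]

local notation "Cc" => algebraMap F A

lemma fact1 (r : ℕ) : ((r:F)+1) * (((r+1).factorial : F))⁻¹ = ((r.factorial : F))⁻¹ := by
  have h2 : ((r.factorial : F)) ≠ 0 := Nat.cast_ne_zero.mpr r.factorial_ne_zero
  have h1 : ((r:F)+1) ≠ 0 := by
    have := Nat.cast_add_one_ne_zero (R := F) r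
    push_cast at this ⊢
    exact this
  rw [Nat.factorial_succ]
  push_cast
  field_simp

variable (h e y : A) (he : h * e - e * h = e) (lam : F)

include he

lemma hA1 (r : ℕ) :
    (h*e) * (fallPow h (0:F) r * e^r) = fallPow h (0:F) (r+1) * e^(r+1) := by
  have h0 : fallPow h (0:F) (r+1) = h * fallPow h ((0:F)-1) r := by
    rw [fall_succ']
    simp
  calc (h*e) * (fallPow h (0:F) r * e^r) = h * ((e * fallPow h (0:F) r) * e^r) := by noncomm_ring
    _ = h * ((fallPow h ((0:F)-1) r * e) * e^r) := by rw [e_mul_fall (F:=F) h e he 0 r]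
    _ = (h * fallPow h ((0:F)-1) r) * (e * e^r) := by noncomm_ring
    _ = fallPow h (0:F) (r+1) * e^(r+1) := by rw [← h0, pow_succ']

lemma hA2 (q : ℕ) :
    (fallPow h (0:F) q * e^q) * (h*e) = fallPow h (0:F) (q+1) * e^(q+1) := by
  have hq : e^q * h = (h - Cc ((q:ℕ):F)) * e^q := pow_mul_h (F:=F) h e he q
  have hdef : fallPow h (0:F) (q+1) = fallPow h (0:F) q * (h + Cc ((0:F) - ((q:ℕ):F))) := rfl
  have hsub : h + Cc ((0:F) - ((q:ℕ):F)) = h - Cc ((q:ℕ):F) := by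
    rw [zero_sub, map_neg, ← sub_eq_add_neg]
  calc (fallPow h (0:F) q * e^q) * (h*e) = fallPow h (0:F) q * ((e^q * h) * e) := by noncomm_ring
    _ = fallPow h (0:F) q * (((h - Cc ((q:ℕ):F)) * e^q) * e) := by rw [hq]
    _ = (fallPow h (0:F) q * (h - Cc ((q:ℕ):F))) * (e^q * e) := by noncomm_ring
    _ = fallPow h (0:F) (q+1) * e^(q+1) := by rw [hdef, hsub, pow_succ]

lemma vrec (r : ℕ) : ((r:F)+1) • vCo F h e (r+1) = (h*e) * vCo F h e r := by
  unfold vCo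
  rw [smul_smul, fact1, mul_smul_comm, hA1 h e he r]

lemma urec (q : ℕ) : ((q:F)+1) • uCo F h e (q+1) = -(uCo F h e q * (h*e)) := by
  unfold uCo
  have hsc : ((q:F)+1) * ((-1:F)^(q+1) / (((q+1).factorial : F)))
      = -((-1:F)^q / ((q.factorial : F))) := by
    have h2 : ((q.factorial : F)) ≠ 0 := Nat.cast_ne_zero.mpr q.factorial_ne_zero
    have h1 : ((q:F)+1) ≠ 0 := by
      have := Nat.cast_add_one_ne_zero (R := F) q
      push_cast at this ⊢
      exact this
    rw [Nat.factorial_succ, pow_succ]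
    push_cast
    field_simp
  rw [smul_smul, hsc, smul_mul_assoc, hA2 h e he q, neg_smul]

lemma pairL (r ℓ : ℕ) :
    (h*e) * (vCo F h e r * (y * uCo F h e ℓ)) - (vCo F h e r * (y * uCo F h e ℓ)) * (h*e)
      = ((r:F)+1) • (vCo F h e (r+1) * (y * uCo F h e ℓ))
        + ((ℓ:F)+1) • (vCo F h e r * (y * uCo F h e (ℓ+1))) := by
  have t1 : ((r:F)+1) • (vCo F h e (r+1) * (y * uCo F h e ℓ))
      = ((h*e) * vCo F h e r) * (y * uCo F h e ℓ) := by
    rw [← smul_mul_assoc, vrec h e he]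
  have t2 : ((ℓ:F)+1) • (vCo F h e r * (y * uCo F h e (ℓ+1)))
      = vCo F h e r * (y * (-(uCo F h e ℓ * (h*e)))) := by
    rw [← urec h e he ℓ, mul_smul_comm, mul_smul_comm]
  rw [t1, t2]
  noncomm_ring

lemma qCo_eq (ℓ : ℕ) :
    qCo F h e y ℓ = ((ℓ.factorial : F))⁻¹ • (zIt e y ℓ * risePow h (1:F) ℓ) := by
  unfold qCo dPow zIt
  rw [smul_mul_assoc]

lemma pairR (hy : h * y - y * h = lam • y) (r ℓ : ℕ) :
    (h*e) * (pCo F e lam r * qCo F h e y ℓ) - (pCo F e lam r * qCo F h e y ℓ) * (h*e)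
      = ((r:F)+1) • (pCo F e lam (r+1) * qCo F h e y ℓ)
        + ((ℓ:F)+1) • (pCo F e lam r * qCo F h e y (ℓ+1)) := by
  have hPQ : ∀ r' ℓ' : ℕ, pCo F e lam r' * qCo F h e y ℓ'
      = ((((r'.factorial : F))⁻¹ * riseC lam r') * ((ℓ'.factorial : F))⁻¹)
          • (e^r' * (zIt e y ℓ' * risePow h (1:F) ℓ')) := by
    intro r' ℓ'
    rw [qCo_eq h e y he, pCo, smul_mul_assoc, mul_smul_comm, smul_smul]
  have hrise : riseC lam (r+1) = riseC lam r * (lam + (r:F)) := Finset.prod_range_succ _ _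
  have sc3 : ((r:F)+1) * ((((r+1).factorial : F))⁻¹ * riseC lam (r+1) * ((ℓ.factorial : F))⁻¹)
      = ((((r.factorial : F))⁻¹ * riseC lam r) * ((ℓ.factorial : F))⁻¹) * (lam + (r:F)) := by
    rw [hrise]
    linear_combination (riseC lam r * ((ℓ.factorial : F))⁻¹ * (lam + (r:F))) * fact1 (F:=F) r
  have sc4 : ((ℓ:F)+1) * ((((r.factorial : F))⁻¹ * riseC lam r) * (((ℓ+1).factorial : F))⁻¹)
      = (((r.factorial : F))⁻¹ * riseC lam r) * ((ℓ.factorial : F))⁻¹ := by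
    linear_combination (((r.factorial : F))⁻¹ * riseC lam r) * fact1 (F:=F) ℓ
  rw [hPQ r ℓ, hPQ (r+1) ℓ, hPQ r (ℓ+1)]
  rw [mul_smul_comm, smul_mul_assoc, ← smul_sub, core h e he y lam hy r ℓ]
  rw [smul_smul, sc3, smul_smul, sc4]
  rw [smul_add, smul_smul]

end part4


theorem deformed_antipode {F A : Type*} [Field F] [CharZero F] [Ring A] [Algebra F A]
    (h e : A) (he : h * e - e * h = e)
    (y : A) (lam : F) (hy : h * y - y * h = lam • y) :
    vSer h e (0 : F) * PowerSeries.C y * uSer h e (0 : F) =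
      oneSubEtNegPow e lam *
        PowerSeries.mk (fun ℓ => dPow F e ℓ y * risePow h (1 : F) ℓ) := by
  have huSer : uSer h e (0:F) = PowerSeries.mk (uCo F h e) := by
    unfold uSer uCo
    rw [neg_zero]
  have hvSer : vSer h e (0:F) = PowerSeries.mk (vCo F h e) := rfl
  have hone : oneSubEtNegPow e lam = PowerSeries.mk (pCo F e lam) := rfl
  have hQ : (fun ℓ => dPow F e ℓ y * risePow h (1:F) ℓ) = qCo F h e y := rfl
  rw [huSer, hvSer, hone, hQ, mul_assoc, C_mul_mk]
  apply ode_unique (F := F) (w := h*e)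
  · -- constant coefficients
    simp [PowerSeries.coeff_zero_eq_constantCoeff, map_mul, vCo, uCo, pCo, qCo, dPow,
      fallPow, risePow, riseC]
  · exact fun n => ode_coeff (F := F) _ _ (fun r ℓ => pairL h e y he r ℓ) n
  · exact fun n => ode_coeff (F := F) _ _ (fun r ℓ => pairR h e y he lam hy r ℓ) n
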